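/- arXiv:1606.03961 — 6 statements merged into one kernel-verified Lean document; each statement's English description precedes it below -/
import Mathlib

section
/- Let V and H be Hilbert spaces, j : V → H bounded linear with dense range, and 𝔞 : V × V → ℝ a continuous bilinear form such that V = V_j(𝔞) + ker j and V_j(𝔞) ∩ ker j = {0}. Then the relation A := {(x,f) ∈ H × H : ∃ u ∈ V, x = j(u) and ∀ v ∈ V, 𝔞(u,v) = ⟨f, j(v)⟩_H} is the graph of a (single-valued) linear operator on H, provided additionally that for u ∈ V with j(u) = 0 and 𝔞(u,v) = 0 for all v ∈ ker j one has u = 0. -/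
open scoped RealInnerProductSpace

/-- If `V = V_j(a) + ker j`, `V_j(a) ∩ ker j = {0}`, and condition (*) holds
(`j u = 0` and `a(u,v) = 0` for all `v ∈ ker j` imply `u = 0`), then the relation
`A = {(x,f) : ∃ u, x = j u and a(u,v) = ⟨f, j v⟩ for all v}` is the graph of a single-valued
linear operator on `H`. -/
theorem associated_relation_is_graph_of_linear_operator
    {V H : Type*} [NormedAddCommGroup V] [InnerProductSpace ℝ V] [CompleteSpace V]
    [NormedAddCommGroup H] [InnerProductSpace ℝ H] [CompleteSpace H]
    (j : V →L[ℝ] H) (hdense : DenseRange j)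
    (a : V →L[ℝ] V →L[ℝ] ℝ)
    (hsum : ∀ u : V, ∃ w z : V, (∀ v : V, j v = 0 → a w v = 0) ∧ j z = 0 ∧ u = w + z)
    (hcap : ∀ u : V, (∀ v : V, j v = 0 → a u v = 0) → j u = 0 → u = 0)
    (hstar : ∀ u : V, j u = 0 → (∀ v : V, j v = 0 → a u v = 0) → u = 0) :
    (∀ x f g : H,
        (∃ u : V, x = j u ∧ ∀ v : V, a u v = ⟪f, j v⟫) →
        (∃ u : V, x = j u ∧ ∀ v : V, a u v = ⟪g, j v⟫) → f = g) ∧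
      ∃ S : Submodule ℝ (H × H),
        (S : Set (H × H)) =
          {p : H × H | ∃ u : V, p.1 = j u ∧ ∀ v : V, a u v = ⟪p.2, j v⟫} := by
  constructor
  · rintro x f g ⟨u, hu, hf⟩ ⟨w, hw, hg⟩
    have hj : j (u - w) = 0 := by
      simp [map_sub, ← hu, ← hw]
    have huw : u - w = 0 := by
      apply hstar _ hj
      intro v hv
      have := hf v
      have := hg v
      simp [map_sub, hf v, hg v, hv]
    have hu0 : u = w := sub_eq_zero.mp huw
    have key : ∀ v : V, ⟪f - g, j v⟫ = 0 := by
      intro v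
      rw [inner_sub_left]
      rw [← hf v, ← hg v, hu0, sub_self]
    have : f - g = 0 := by
      have hcont : Continuous fun h : H => ⟪f - g, h⟫ := by
        exact (innerSL ℝ (f - g)).continuous
      have : ∀ h : H, ⟪f - g, h⟫ = 0 := by
        intro h
        have := hdense.induction_on (p := fun h => ⟪f - g, h⟫ = 0) h
          (isClosed_eq hcont continuous_const) (fun v => key v)
        exact this
      exact inner_self_eq_zero.mp (this (f - g))
    exact sub_eq_zero.mp this
  · refine ⟨⟨⟨⟨{p : H × H | ∃ u : V, p.1 = j u ∧ ∀ v : V, a u v = ⟪p.2, j v⟫},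
      ?_⟩, ?_⟩, ?_⟩, rfl⟩
    · rintro ⟨x, f⟩ ⟨y, g⟩ ⟨u, hu, hf⟩ ⟨w, hw, hg⟩
      exact ⟨u + w, by simp only at hu hw; simp [hu, hw], fun v => by simp [hf v, hg v, inner_add_left]⟩
    · exact ⟨0, by simp⟩
    · rintro c ⟨x, f⟩ ⟨u, hu, hf⟩
      exact ⟨c • u, by simp only at hu; simp [hu], fun v => by simp [hf v, inner_smul_left]⟩
end

section
/- Let V, H, H̃ be Hilbert spaces, j : V → H bounded with dense range, and 𝔞 : V × V → ℝ a continuous bilinear form. Suppose 𝔞 is compactly elliptic: there exists a compact operator j̃ : V → H̃ and α̃ > 0 such that 𝔞(u,u) + ‖j̃(u)‖²_{H̃} ≥ α̃‖u‖²_V for all u ∈ V. Suppose moreover condition (*): if u ∈ V, j(u) = 0 and 𝔞(u,v) = 0 for all v ∈ ker j, then u = 0. Then the restriction of j to W := {u ∈ V : ∀ v ∈ ker j, 𝔞(u,v) = 0} is injective, and there exist α > 0 and ω ∈ ℝ with 𝔞(u,u) + ω‖j(u)‖²_H ≥ α‖u‖²_V for all u ∈ W. -/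
open scoped RealInnerProductSpace
open Filter Topology

lemma weak_seq_compact_aux {V : Type*} [NormedAddCommGroup V] [InnerProductSpace ℝ V]
    [CompleteSpace V] (u : ℕ → V) (C : ℝ) (hC : ∀ n, ‖u n‖ ≤ C) :
    ∃ (x : V) (φ : ℕ → ℕ), StrictMono φ ∧
      ∀ w : V, Tendsto (fun k => ⟪u (φ k), w⟫) atTop (𝓝 ⟪x, w⟫) := by
  have hC0 : 0 ≤ C := le_trans (norm_nonneg _) (hC 0)
  set V₀ : Submodule ℝ V := (Submodule.span ℝ (Set.range u)).topologicalClosure with hV₀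
  haveI : CompleteSpace V₀ := (Submodule.isClosed_topologicalClosure _).completeSpace_coe
  have hu : ∀ n, u n ∈ V₀ :=
    fun n => Submodule.le_topologicalClosure _ (Submodule.subset_span ⟨n, rfl⟩)
  have hsep : TopologicalSpace.IsSeparable (V₀ : Set V) := by
    have h1 : TopologicalSpace.IsSeparable (Submodule.span ℝ (Set.range u) : Set V) :=
      (Set.countable_range u).isSeparable.span
    have h2 := h1.closure
    rwa [hV₀, Submodule.topologicalClosure_coe]
  obtain ⟨t, htc, htsub⟩ := hsep
  obtain ⟨d, hd⟩ := (htc.insert 0).exists_eq_range (Set.insert_nonempty _ _)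
  have hdense : ∀ y ∈ V₀, ∀ ε > 0, ∃ m, ‖y - d m‖ < ε := by
    intro y hy ε hε
    obtain ⟨z, hz, hzd⟩ := Metric.mem_closure_iff.1 (htsub hy) ε hε
    have hz' : z ∈ Set.range d := by rw [← hd]; exact Set.mem_insert_of_mem _ hz
    obtain ⟨m, rfl⟩ := hz'
    exact ⟨m, by rwa [← dist_eq_norm]⟩
  set S : Set (ℕ → ℝ) := Set.univ.pi fun m => Set.Icc (-(C * ‖d m‖)) (C * ‖d m‖) with hS
  have hScomp : IsCompact S := isCompact_univ_pi fun m => isCompact_Icc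
  have habs : ∀ n (z : V), |⟪u n, z⟫| ≤ C * ‖z‖ := fun n z =>
    (abs_real_inner_le_norm _ _).trans (mul_le_mul_of_nonneg_right (hC n) (norm_nonneg _))
  have hmem : ∀ n, (fun m => ⟪u n, d m⟫) ∈ S := by
    intro n
    rw [hS, Set.mem_univ_pi]
    intro m
    rw [Set.mem_Icc, ← abs_le]
    exact habs n (d m)
  obtain ⟨g, -, φ, hφ, hg⟩ := hScomp.tendsto_subseq hmem
  have hgm : ∀ m, Tendsto (fun k => ⟪u (φ k), d m⟫) atTop (𝓝 (g m)) :=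
    fun m => (tendsto_pi_nhds.1 hg) m
  have key : ∀ n (w : V), ⟪u n, w⟫ = ⟪u n, (Submodule.orthogonalProjection V₀ w : V)⟫ := by
    intro n w
    have h1 : w - Submodule.orthogonalProjection V₀ w ∈ V₀ᗮ := Submodule.sub_starProjection_mem_orthogonal (K := V₀) w
    have h2 : ⟪u n, w - Submodule.orthogonalProjection V₀ w⟫ = 0 :=
      (Submodule.mem_orthogonal V₀ _).1 h1 (u n) (hu n)
    rw [inner_sub_right] at h2
    linarith
  have hcau : ∀ w : V, CauchySeq fun k => ⟪u (φ k), w⟫ := by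
    intro w
    set p : V := (Submodule.orthogonalProjection V₀ w : V) with hp
    have hpV₀ : p ∈ V₀ := (Submodule.orthogonalProjection V₀ w).2
    rw [Metric.cauchySeq_iff]
    intro ε hε
    obtain ⟨m, hm⟩ := hdense p hpV₀ (ε / 4 / (C + 1)) (by positivity)
    have hcm : CauchySeq fun k => ⟪u (φ k), d m⟫ := (hgm m).cauchySeq
    rw [Metric.cauchySeq_iff] at hcm
    obtain ⟨N, hN⟩ := hcm (ε / 2) (by positivity)
    refine ⟨N, fun k hk k' hk' => ?_⟩
    have e1 : ∀ l, ⟪u (φ l), w⟫ = ⟪u (φ l), d m⟫ + ⟪u (φ l), p - d m⟫ := by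
      intro l
      rw [key (φ l) w, ← hp, inner_sub_right]
      ring
    have hb1 : |⟪u (φ k), p - d m⟫| ≤ C * ‖p - d m‖ := habs _ _
    have hb2 : |⟪u (φ k'), p - d m⟫| ≤ C * ‖p - d m‖ := habs _ _
    have hd2 := hN k hk k' hk'
    rw [Real.dist_eq] at hd2 ⊢
    have hsmall : C * ‖p - d m‖ < ε / 4 := by
      have h3 : C * ‖p - d m‖ ≤ (C + 1) * ‖p - d m‖ :=
        mul_le_mul_of_nonneg_right (by linarith) (norm_nonneg _)
      have h4 : (C + 1) * ‖p - d m‖ < (C + 1) * (ε / 4 / (C + 1)) := by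
        have : (0:ℝ) < C + 1 := by linarith
        exact (mul_lt_mul_iff_right₀ this).2 hm
      have h5 : (C + 1) * (ε / 4 / (C + 1)) = ε / 4 := by
        field_simp
      linarith
    rw [e1 k, e1 k']
    have := abs_sub_abs_le_abs_sub (⟪u (φ k), p - d m⟫) (⟪u (φ k'), p - d m⟫)
    calc |⟪u (φ k), d m⟫ + ⟪u (φ k), p - d m⟫ - (⟪u (φ k'), d m⟫ + ⟪u (φ k'), p - d m⟫)|
        ≤ |⟪u (φ k), d m⟫ - ⟪u (φ k'), d m⟫| + |⟪u (φ k), p - d m⟫| + |⟪u (φ k'), p - d m⟫| := by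
          have := abs_add_le (⟪u (φ k), d m⟫ - ⟪u (φ k'), d m⟫)
            (⟪u (φ k), p - d m⟫ - ⟪u (φ k'), p - d m⟫)
          have h6 := abs_sub (⟪u (φ k), p - d m⟫) (⟪u (φ k'), p - d m⟫)
          have h7 : ⟪u (φ k), d m⟫ + ⟪u (φ k), p - d m⟫ - (⟪u (φ k'), d m⟫ + ⟪u (φ k'), p - d m⟫)
              = (⟪u (φ k), d m⟫ - ⟪u (φ k'), d m⟫) + (⟪u (φ k), p - d m⟫ - ⟪u (φ k'), p - d m⟫) := by ring
          rw [h7]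
          calc |(⟪u (φ k), d m⟫ - ⟪u (φ k'), d m⟫) + (⟪u (φ k), p - d m⟫ - ⟪u (φ k'), p - d m⟫)|
              ≤ |⟪u (φ k), d m⟫ - ⟪u (φ k'), d m⟫| + |⟪u (φ k), p - d m⟫ - ⟪u (φ k'), p - d m⟫| :=
                abs_add_le _ _
            _ ≤ _ := by
                have := abs_sub_le (⟪u (φ k), p - d m⟫) 0 (⟪u (φ k'), p - d m⟫)
                simp only [sub_zero, zero_sub, abs_neg] at this
                linarith
      _ < ε := by linarith
  have hlim : ∀ w : V, ∃ L : ℝ, Tendsto (fun k => ⟪u (φ k), w⟫) atTop (𝓝 L) :=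
    fun w => cauchySeq_tendsto_of_complete (hcau w)
  choose L hL using hlim
  have Ladd : ∀ w w', L (w + w') = L w + L w' := fun w w' =>
    tendsto_nhds_unique (hL _) (by
      have := (hL w).add (hL w')
      simpa [inner_add_right] using this)
  have Lsmul : ∀ (c : ℝ) (w : V), L (c • w) = c * L w := fun c w =>
    tendsto_nhds_unique (hL _) (by
      have := (hL w).const_mul c
      simpa [inner_smul_right] using this)
  have Lbound : ∀ w, |L w| ≤ C * ‖w‖ := fun w =>
    le_of_tendsto (hL w).abs (Filter.Eventually.of_forall fun k => habs _ _)
  let Llin : V →ₗ[ℝ] ℝ :=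
    { toFun := L, map_add' := Ladd, map_smul' := fun c w => by simpa using Lsmul c w }
  let Lc : V →L[ℝ] ℝ := Llin.mkContinuous C fun w => by
    simpa [Real.norm_eq_abs, Llin] using Lbound w
  refine ⟨(InnerProductSpace.toDual ℝ V).symm Lc, φ, hφ, fun w => ?_⟩
  have : ⟪(InnerProductSpace.toDual ℝ V).symm Lc, w⟫ = Lc w :=
    InnerProductSpace.toDual_symm_apply
  rw [this]
  exact hL w

open scoped RealInnerProductSpace
open Filter Topology


/-- If the continuous bilinear form `a` is compactly elliptic and satisfies
condition (*), then `j` is injective on `W = V_j(a)` and `a` is `j`-elliptic on `W`. -/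
theorem compactly_elliptic_implies_elliptic_on_Vj
    {V H H' : Type*} [NormedAddCommGroup V] [InnerProductSpace ℝ V] [CompleteSpace V]
    [NormedAddCommGroup H] [InnerProductSpace ℝ H] [CompleteSpace H]
    [NormedAddCommGroup H'] [InnerProductSpace ℝ H'] [CompleteSpace H']
    (j : V →L[ℝ] H) (hdense : DenseRange j)
    (jt : V →L[ℝ] H') (hcompact : IsCompactOperator jt)
    (a : V →L[ℝ] V →L[ℝ] ℝ) (αt : ℝ) (hαt : 0 < αt)
    (hce : ∀ u : V, a u u + ‖jt u‖ ^ 2 ≥ αt * ‖u‖ ^ 2)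
    (hstar : ∀ u : V, j u = 0 → (∀ v : V, j v = 0 → a u v = 0) → u = 0) :
    Set.InjOn j {u : V | ∀ v : V, j v = 0 → a u v = 0} ∧
      ∃ α ω : ℝ, 0 < α ∧
        ∀ u ∈ {u : V | ∀ v : V, j v = 0 → a u v = 0},
          a u u + ω * ‖j u‖ ^ 2 ≥ α * ‖u‖ ^ 2 := by
  constructor
  · intro p hp q hq hpq
    have h1 : j (p - q) = 0 := by rw [map_sub, hpq, sub_self]
    have h2 : ∀ v, j v = 0 → a (p - q) v = 0 := by
      intro v hv
      rw [map_sub, ContinuousLinearMap.sub_apply, hp v hv, hq v hv, sub_self]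
    exact sub_eq_zero.1 (hstar _ h1 h2)
  · by_contra hcon
    push_neg at hcon
    have hseq : ∀ n : ℕ, ∃ u : V, (∀ v, j v = 0 → a u v = 0) ∧
        a u u + (n + 1 : ℝ) * ‖j u‖ ^ 2 < (αt / 2) * ‖u‖ ^ 2 := by
      intro n
      obtain ⟨u, hu, hlt⟩ := hcon (αt / 2) (n + 1) (by positivity)
      exact ⟨u, hu, hlt⟩
    choose w hwW hwlt using hseq
    have hnz : ∀ n, w n ≠ 0 := by
      intro n hn
      have := hwlt n
      rw [hn] at this
      simp at this
    set v : ℕ → V := fun n => ‖w n‖⁻¹ • w n with hv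
    have hv1 : ∀ n, ‖v n‖ = 1 := fun n => norm_smul_inv_norm (hnz n)
    have hvW : ∀ n, ∀ z, j z = 0 → a (v n) z = 0 := by
      intro n z hz
      rw [hv]
      simp only [map_smul, ContinuousLinearMap.smul_apply, hwW n z hz, smul_eq_mul, mul_zero]
    have hineq : ∀ n : ℕ, a (v n) (v n) + (n + 1 : ℝ) * ‖j (v n)‖ ^ 2 < αt / 2 := by
      intro n
      have hc : (0:ℝ) < ‖w n‖ := norm_pos_iff.2 (hnz n)
      have e1 : a (v n) (v n) = ‖w n‖⁻¹ ^ 2 * a (w n) (w n) := by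
        rw [hv]
        simp only [map_smul, ContinuousLinearMap.smul_apply, smul_eq_mul]
        ring
      have e2 : ‖j (v n)‖ ^ 2 = ‖w n‖⁻¹ ^ 2 * ‖j (w n)‖ ^ 2 := by
        rw [hv]
        simp only [map_smul, norm_smul, norm_inv, norm_norm]
        ring
      have e3 : (1:ℝ) = ‖w n‖⁻¹ ^ 2 * ‖w n‖ ^ 2 := by
        field_simp
      rw [e1, e2]
      have hlt := hwlt n
      have hpos : (0:ℝ) < ‖w n‖⁻¹ ^ 2 := by positivity
      calc ‖w n‖⁻¹ ^ 2 * a (w n) (w n) + (n + 1 : ℝ) * (‖w n‖⁻¹ ^ 2 * ‖j (w n)‖ ^ 2)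
          = ‖w n‖⁻¹ ^ 2 * (a (w n) (w n) + (n + 1 : ℝ) * ‖j (w n)‖ ^ 2) := by ring
        _ < ‖w n‖⁻¹ ^ 2 * ((αt / 2) * ‖w n‖ ^ 2) := (mul_lt_mul_iff_right₀ hpos).2 hlt
        _ = αt / 2 * (‖w n‖⁻¹ ^ 2 * ‖w n‖ ^ 2) := by ring
        _ = αt / 2 := by rw [← e3, mul_one]
    -- ‖j (v n)‖ → 0
    have habound : ∀ n, -(‖a‖) ≤ a (v n) (v n) := by
      intro n
      have h1 : |a (v n) (v n)| ≤ ‖a‖ := by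
        have := a.le_opNorm (v n)
        have h2 := (a (v n)).le_opNorm (v n)
        rw [hv1 n, mul_one] at this h2
        calc |a (v n) (v n)| = ‖a (v n) (v n)‖ := (Real.norm_eq_abs _).symm
          _ ≤ ‖a (v n)‖ := h2
          _ ≤ ‖a‖ := this
      linarith [abs_le.1 h1]
    have hjvsq : ∀ n : ℕ, ‖j (v n)‖ ^ 2 ≤ (αt / 2 + ‖a‖) * (1 / (n + 1 : ℝ)) := by
      intro n
      have h1 := hineq n
      have h2 := habound n
      have hn1 : (0:ℝ) < (n:ℝ) + 1 := by positivity
      rw [mul_one_div, le_div_iff₀ hn1]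
      nlinarith [sq_nonneg ‖j (v n)‖]
    have hjv0 : Tendsto (fun n => ‖j (v n)‖ ^ 2) atTop (𝓝 0) := by
      refine squeeze_zero (fun n => by positivity) hjvsq ?_
      have h1 : Tendsto (fun n : ℕ => 1 / ((n:ℝ) + 1)) atTop (𝓝 0) :=
        tendsto_one_div_add_atTop_nhds_zero_nat
      have := h1.const_mul (αt / 2 + ‖a‖)
      simpa using this
    have hjv0' : Tendsto (fun n => j (v n)) atTop (𝓝 0) := by
      rw [tendsto_zero_iff_norm_tendsto_zero]
      have := hjv0.sqrt
      simpa [Real.sqrt_sq (norm_nonneg _)] using this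
    -- weak limit
    obtain ⟨x, φ, hφ, hweak⟩ := weak_seq_compact_aux v 1 fun n => (hv1 n).le
    have hxW : ∀ z, j z = 0 → a x z = 0 := by
      intro z hz
      set r : V := (InnerProductSpace.toDual ℝ V).symm (a.flip z) with hr
      have hra : ∀ y : V, a y z = ⟪y, r⟫ := by
        intro y
        rw [real_inner_comm, hr, InnerProductSpace.toDual_symm_apply,
          ContinuousLinearMap.flip_apply]
      have h1 : Tendsto (fun k => a (v (φ k)) z) atTop (𝓝 (a x z)) := by
        simp only [hra]
        exact hweak r
      have h2 : (fun k => a (v (φ k)) z) = fun _ => (0:ℝ) :=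
        funext fun k => hvW (φ k) z hz
      rw [h2] at h1
      exact tendsto_nhds_unique h1 tendsto_const_nhds
    have hadj : ∀ (y : V) (h : H), ⟪y, ContinuousLinearMap.adjoint j h⟫ = ⟪j y, h⟫ := by
      intro y h
      rw [real_inner_comm, ContinuousLinearMap.adjoint_inner_left, real_inner_comm]
    have hjx : j x = 0 := by
      have h1 := hweak (ContinuousLinearMap.adjoint j (j x))
      simp only [hadj] at h1
      have h4 : Tendsto (fun k => ⟪j (v (φ k)), j x⟫) atTop (𝓝 (0:ℝ)) := by
        have h5 := Filter.Tendsto.inner (𝕜 := ℝ) (hjv0'.comp hφ.tendsto_atTop) (tendsto_const_nhds (x := j x))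
        simpa using h5
      have h6 : ⟪j x, j x⟫ = (0:ℝ) := tendsto_nhds_unique h1 h4
      exact inner_self_eq_zero.1 h6
    have hx0 : x = 0 := hstar x hjx hxW
    -- compactness of jt on the sequence
    have hbdd : Bornology.IsBounded (Set.range fun k => v (φ k)) := by
      rw [isBounded_iff_forall_norm_le]
      exact ⟨1, by rintro y ⟨k, rfl⟩; exact (hv1 (φ k)).le⟩
    have hcomp : IsCompact (closure (jt '' Set.range fun k => v (φ k))) := by
      have := hcompact.isCompact_closure_image_of_bounded (f := (jt : V →ₗ[ℝ] H')) hbdd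
      exact this
    have hmem2 : ∀ k, jt (v (φ k)) ∈ closure (jt '' Set.range fun k => v (φ k)) :=
      fun k => subset_closure ⟨v (φ k), ⟨k, rfl⟩, rfl⟩
    obtain ⟨h0, -, ψ, hψ, hconv⟩ := hcomp.tendsto_subseq hmem2
    have hadjt : ∀ (y : V) (h : H'), ⟪y, ContinuousLinearMap.adjoint jt h⟫ = ⟪jt y, h⟫ := by
      intro y h
      rw [real_inner_comm, ContinuousLinearMap.adjoint_inner_left, real_inner_comm]
    have hh0 : h0 = 0 := by
      have h1 : Tendsto (fun k => ⟪v (φ (ψ k)), ContinuousLinearMap.adjoint jt h0⟫) atTop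
          (𝓝 ⟪x, ContinuousLinearMap.adjoint jt h0⟫) :=
        (hweak (ContinuousLinearMap.adjoint jt h0)).comp hψ.tendsto_atTop
      simp only [hadjt] at h1
      have h2 : Tendsto (fun k => ⟪jt (v (φ (ψ k))), h0⟫) atTop (𝓝 (⟪h0, h0⟫)) := by
        have := Filter.Tendsto.inner (𝕜 := ℝ) hconv (tendsto_const_nhds (x := h0))
        exact this
      have h3 : ⟪jt x, h0⟫ = ⟪h0, h0⟫ := tendsto_nhds_unique h1 h2
      rw [hx0, map_zero, inner_zero_left] at h3
      exact inner_self_eq_zero.1 h3.symm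
    -- contradiction
    have hlb : ∀ n, αt / 2 ≤ ‖jt (v n)‖ ^ 2 := by
      intro n
      have h1 := hce (v n)
      rw [hv1 n] at h1
      have h2 := hineq n
      have h3 : (0:ℝ) ≤ (n + 1 : ℝ) * ‖j (v n)‖ ^ 2 := by positivity
      nlinarith
    have hlim0 : Tendsto (fun k => ‖jt (v (φ (ψ k)))‖ ^ 2) atTop (𝓝 (0:ℝ)) := by
      rw [hh0] at hconv
      have h1 : Tendsto (fun k => ‖jt (v (φ (ψ k)))‖) atTop (𝓝 (0:ℝ)) := by
        have := hconv.norm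
        simpa using this
      have := h1.pow 2
      simpa using this
    have : αt / 2 ≤ (0:ℝ) :=
      le_of_tendsto_of_tendsto tendsto_const_nhds hlim0
        (Filter.Eventually.of_forall fun k => hlb _)
    linarith
end

section
/- Let Ω ⊂ ℝ^N be a bounded open set with Lipschitz boundary, assume a symmetric uniformly elliptic with constant κ, b, c ∈ L^∞(Ω)^N, d ∈ L^∞(Ω), and λ ∉ σ(A_D) where A_D is the Dirichlet realization of 𝒜u = −div(a∇u) + b·∇u − div(cu) + du. Then H¹(Ω) = H¹₀(Ω) ⊕ V_j(𝔞_λ), where 𝔞_λ(u,v) = ∫_Ω a∇u·∇v + ∫_Ω (b·∇u)v + ∫_Ω u(c·∇v) + ∫_Ω duv − λ∫_Ω uv and V_j(𝔞_λ) = {u ∈ H¹(Ω) : 𝔞_λ(u,v) = 0 for all v ∈ H¹₀(Ω)}. -/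
open scoped RealInnerProductSpace

/-- Decomposition `H¹(Ω) = H¹₀(Ω) ⊕ V_j(𝔞_λ)` when `λ ∉ σ(A_D)`.
Abstractly: `V` is the Hilbert space `H¹(Ω)`, `V₀` its closed subspace `H¹₀(Ω)`,
`ι : V → H = L²(Ω)` the embedding, `a` the form of the elliptic operator, and
`𝔞_λ(u,v) = 𝔞(u,v) − λ⟨ιu, ιv⟩`. The condition `λ ∉ σ(A_D)` is encoded by the
invertibility of `λ − L : H¹₀(Ω) → H⁻¹(Ω)`: every continuous functional is uniquely
represented. The conclusion asserts `V = V₀ + V_j(𝔞_λ)` and `V₀ ∩ V_j(𝔞_λ) = {0}`. -/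
theorem H1_decomposition
    {V H : Type*} [NormedAddCommGroup V] [InnerProductSpace ℝ V] [CompleteSpace V]
    [NormedAddCommGroup H] [InnerProductSpace ℝ H] [CompleteSpace H]
    (ι : V →L[ℝ] H) (hι : Function.Injective ι)
    (V₀ : Submodule ℝ V) (hV₀ : IsClosed (V₀ : Set V))
    (a : V →L[ℝ] V →L[ℝ] ℝ) (lam : ℝ)
    -- `λ − L : H¹₀(Ω) → H⁻¹(Ω)` is invertible (`λ ∉ σ(A_D)`):
    (hres : ∀ Φ : V →L[ℝ] ℝ, ∃ u₀ ∈ V₀,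
        (∀ v ∈ V₀, lam * ⟪ι u₀, ι v⟫ - a u₀ v = Φ v) ∧
        ∀ w ∈ V₀, (∀ v ∈ V₀, lam * ⟪ι w, ι v⟫ - a w v = Φ v) → w = u₀) :
    (∀ u : V, ∃ u₀ ∈ V₀, ∃ u₁ : V,
        (∀ v ∈ V₀, a u₁ v - lam * ⟪ι u₁, ι v⟫ = 0) ∧ u = u₀ + u₁) ∧
      ∀ u ∈ V₀, (∀ v ∈ V₀, a u v - lam * ⟪ι u, ι v⟫ = 0) → u = 0 := by
  constructor
  · intro u
    set Φ : V →L[ℝ] ℝ := lam • ((innerSL ℝ (ι u)).comp ι) - a u with hΦ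
    obtain ⟨u₀, hu₀, hsol, -⟩ := hres Φ
    refine ⟨u₀, hu₀, u - u₀, ?_, by abel⟩
    intro v hv
    have h := hsol v hv
    simp only [hΦ, ContinuousLinearMap.sub_apply, ContinuousLinearMap.smul_apply,
      ContinuousLinearMap.comp_apply, innerSL_apply_apply, smul_eq_mul] at h
    simp only [map_sub, ContinuousLinearMap.sub_apply, inner_sub_left]
    ring_nf
    ring_nf at h
    linarith
  · intro u hu h
    obtain ⟨u₀, hu₀, hsol, huniq⟩ := hres 0
    have h1 : u = u₀ := huniq u hu (fun v hv => by
      have := h v hv; simp; linarith)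
    have h2 : (0 : V) = u₀ := huniq 0 V₀.zero_mem (fun v hv => by simp)
    rw [h1, ← h2]
end

section
/- Let Ω be bounded open with Lipschitz boundary, coefficients as in the Hypothesis with ellipticity constant κ, and λ ∉ σ(A_D). Then there exists ω ∈ ℝ such that 𝔞_λ(u,u) + ω‖u|_{∂Ω}‖²_{L²(∂Ω)} ≥ (κ/4)‖u‖²_{H¹(Ω)} for all u ∈ V_j(𝔞_λ). Consequently the Dirichlet-to-Neumann form 𝔞_λ restricted to V_j(𝔞_λ) is elliptic with respect to the trace map. -/
open scoped RealInnerProductSpace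

set_option maxHeartbeats 1600000 in
/-- Ellipticity of the Dirichlet-to-Neumann form on `V_j(𝔞_λ)`:
there is `ω ∈ ℝ` with `𝔞_λ(u,u) + ω‖u|_∂Ω‖²_{L²(∂Ω)} ≥ (κ/4)‖u‖²_{H¹(Ω)}` on `V_j(𝔞_λ)`.
Abstractly: `V = H¹(Ω)`, `H = L²(Ω)` with compact embedding `ι`, `Hb = L²(∂Ω)` with
compact trace `j`, `𝔞_λ` satisfies the global estimate
`𝔞_λ(u,u) + (|λ|+ω₁)‖ιu‖² ≥ (κ/2)‖u‖²` and `j` is injective on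
`V_j(𝔞_λ) = {u : 𝔞_λ(u,v) = 0 ∀ v ∈ ker j}` (since `λ ∉ σ(A_D)`). -/
theorem DtN_form_elliptic_on_Vj
    {V H Hb : Type*} [NormedAddCommGroup V] [InnerProductSpace ℝ V] [CompleteSpace V]
    [NormedAddCommGroup H] [InnerProductSpace ℝ H] [CompleteSpace H]
    [NormedAddCommGroup Hb] [InnerProductSpace ℝ Hb] [CompleteSpace Hb]
    (ι : V →L[ℝ] H) (hιcompact : IsCompactOperator ι)
    (j : V →L[ℝ] Hb) (hjcompact : IsCompactOperator j) (hjdense : DenseRange j)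
    (alam : V →L[ℝ] V →L[ℝ] ℝ)
    (κ C : ℝ) (hκ : 0 < κ)
    -- the global estimate `𝔞_λ(u,u) + (|λ| + ω₁)‖ι u‖² ≥ (κ/2)‖u‖²` on `H¹(Ω)`:
    (hglobal : ∀ u : V, alam u u + C * ‖ι u‖ ^ 2 ≥ κ / 2 * ‖u‖ ^ 2)
    -- `j` is injective on `V_j(𝔞_λ)` (λ ∉ σ(A_D)):
    (hinj : Set.InjOn j {u : V | ∀ v : V, j v = 0 → alam u v = 0}) :
    ∃ ω : ℝ, ∀ u ∈ {u : V | ∀ v : V, j v = 0 → alam u v = 0},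
      alam u u + ω * ‖j u‖ ^ 2 ≥ κ / 4 * ‖u‖ ^ 2 := by
  classical
  set S : Set V := {u : V | ∀ v : V, j v = 0 → alam u v = 0} with hSdef
  -- upgrade the constant to a positive one
  set C₀ : ℝ := max C 1 with hC₀def
  have hC₀pos : (0:ℝ) < C₀ := lt_of_lt_of_le one_pos (le_max_right _ _)
  have hglobal₀ : ∀ u : V, κ / 2 * ‖u‖ ^ 2 ≤ alam u u + C₀ * ‖ι u‖ ^ 2 := by
    intro u
    have h1 := hglobal u
    have h2 : C * ‖ι u‖ ^ 2 ≤ C₀ * ‖ι u‖ ^ 2 :=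
      mul_le_mul_of_nonneg_right (le_max_left _ _) (by positivity)
    linarith
  -- `V_j(𝔞_λ)` as a submodule
  let K : Submodule ℝ V :=
  { carrier := S
    add_mem' := fun {a b} ha hb v hv => by
      simp only [map_add, ContinuousLinearMap.add_apply, ha v hv, hb v hv, add_zero]
    zero_mem' := fun v hv => by simp
    smul_mem' := fun c a ha v hv => by
      simp only [map_smul, ContinuousLinearMap.smul_apply, ha v hv, smul_zero] }
  have hmemK : ∀ u : V, u ∈ K ↔ u ∈ S := fun _ => Iff.rfl
  have hKclosed : IsClosed (K : Set V) := by
    have hrw : (K : Set V) = ⋂ (v : V) (_ : j v = 0), (alam.flip v) ⁻¹' {0} := by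
      ext u
      simp only [Set.mem_iInter, Set.mem_preimage, Set.mem_singleton_iff,
        ContinuousLinearMap.flip_apply, SetLike.mem_coe]
      exact Iff.rfl
    rw [hrw]
    exact isClosed_iInter fun v => isClosed_iInter fun _ =>
      isClosed_singleton.preimage (alam.flip v).continuous
  haveI : CompleteSpace K := hKclosed.completeSpace_coe
  -- the trace restricted to `K`, and its adjoint
  set T : K →L[ℝ] Hb := j.comp K.subtypeL with hTdef
  set Tad : Hb →L[ℝ] K := ContinuousLinearMap.adjoint T with hTaddef
  have hTapp : ∀ u : K, T u = j (u : V) := fun u => rfl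
  -- `T` is injective
  have hTinj : ∀ u : K, T u = 0 → u = 0 := by
    intro u hu
    have h0 : (0:V) ∈ S := fun v hv => by simp
    have hju : j (u : V) = j 0 := by
      rw [map_zero]; rw [hTapp] at hu; exact hu
    exact Subtype.ext (hinj u.2 h0 hju)
  -- hence `Tad` has dense range
  have horth : (LinearMap.range (Tad : Hb →ₗ[ℝ] K))ᗮ = ⊥ := by
    rw [Submodule.eq_bot_iff]
    intro x hx
    have hx' : ∀ y : Hb, ⟪Tad y, x⟫ = 0 := fun y =>
      (Submodule.mem_orthogonal _ x).1 hx _ (LinearMap.mem_range_self _ y)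
    have hTx : T x = 0 := by
      have h := hx' (T x)
      rw [hTaddef, ContinuousLinearMap.adjoint_inner_left] at h
      exact inner_self_eq_zero.mp h
    exact hTinj x hTx
  have hdense : Dense ((LinearMap.range (Tad : Hb →ₗ[ℝ] K) : Submodule ℝ K) : Set K) := by
    rw [Submodule.dense_iff_topologicalClosure_eq_top,
      Submodule.topologicalClosure_eq_top_iff]
    exact horth
  have happrox : ∀ (e : K), ∀ ε > 0, ∃ y : Hb, ‖Tad y - e‖ < ε := by
    intro e ε hε
    obtain ⟨z, hzball, hzmem⟩ := Metric.dense_iff.mp hdense e ε hε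
    obtain ⟨y, hy⟩ := (LinearMap.mem_range).mp (SetLike.mem_coe.mp hzmem)
    refine ⟨y, ?_⟩
    rw [← dist_eq_norm, show Tad y = z from hy]
    rwa [Metric.mem_ball] at hzball
  -- compactness of `ι`: finite ε-net for the image of the unit ball
  obtain ⟨M, hMcomp, hMmem⟩ := hιcompact
  obtain ⟨δ, hδpos, hδ⟩ := Metric.mem_nhds_iff.mp hMmem
  set M' : Set H := (fun z : H => (2/δ) • z) '' M with hM'def
  have hM'comp : IsCompact M' := hMcomp.image (continuous_const_smul _)
  have hcover : ∀ u : V, ‖u‖ ≤ 1 → ι u ∈ M' := by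
    intro u hu
    have h1 : (δ/2) • u ∈ Metric.ball (0:V) δ := by
      rw [Metric.mem_ball, dist_zero_right, norm_smul]
      have hd : ‖(δ/2 : ℝ)‖ = δ/2 := abs_of_pos (by linarith)
      rw [hd]
      nlinarith [norm_nonneg u]
    have h2 : ι ((δ/2) • u) ∈ M := hδ h1
    refine ⟨ι ((δ/2) • u), h2, ?_⟩
    show (2/δ) • ι ((δ/2) • u) = ι u
    rw [map_smul, smul_smul]
    have hc : (2/δ) * (δ/2) = 1 := by field_simp
    rw [hc, one_smul]
  set ε : ℝ := κ / (32 * C₀ * (‖ι‖ + 1)) with hεdef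
  have hι1 : (0:ℝ) < ‖ι‖ + 1 := by positivity
  have hεpos : 0 < ε := by positivity
  obtain ⟨t, htfin, htsub⟩ := Metric.totallyBounded_iff.mp hM'comp.totallyBounded ε hεpos
  -- choose approximating boundary vectors
  have hYex : ∀ x : H, ∃ y : Hb,
      ‖Tad y - Submodule.orthogonalProjectionOnto K (ContinuousLinearMap.adjoint ι x)‖ < ε :=
    fun x => happrox _ ε hεpos
  choose Y hY using hYex
  set ω : ℝ := ∑ x ∈ htfin.toFinset, 8 * C₀^2 * ‖Y x‖^2 / κ with hωdef
  have hωnonneg : 0 ≤ ω := Finset.sum_nonneg fun x _ => by positivity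
  -- the key estimate for unit vectors in `K`
  have hmain : ∀ u : V, u ∈ S → ‖u‖ = 1 → C₀ * ‖ι u‖^2 ≤ κ/8 + ω * ‖j u‖^2 := by
    intro u huS hu1
    have huK : u ∈ K := huS
    set u' : K := ⟨u, huK⟩ with hu'def
    have hu'1 : ‖u'‖ = 1 := hu1
    have hιu : ι u ∈ M' := hcover u (le_of_eq hu1)
    have hmem := htsub hιu
    rw [Set.mem_iUnion₂] at hmem
    obtain ⟨x, hxt, hxball⟩ := hmem
    have hxdist : ‖ι u - x‖ < ε := by rwa [Metric.mem_ball, dist_eq_norm] at hxball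
    have hnormιu : ‖ι u‖ ≤ ‖ι‖ := by
      calc ‖ι u‖ ≤ ‖ι‖ * ‖u‖ := ι.le_opNorm u
      _ = ‖ι‖ := by rw [hu1, mul_one]
    have h1 : ⟪ι u - x, ι u⟫ ≤ ε * ‖ι‖ := by
      calc ⟪ι u - x, ι u⟫ ≤ ‖ι u - x‖ * ‖ι u‖ := real_inner_le_norm _ _
      _ ≤ ε * ‖ι‖ := mul_le_mul hxdist.le hnormιu (norm_nonneg _) hεpos.le
    have h2 : ⟪x, ι u⟫ = ⟪ContinuousLinearMap.adjoint ι x, u⟫ :=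
      (ContinuousLinearMap.adjoint_inner_left ι u x).symm
    set e : K := Submodule.orthogonalProjectionOnto K (ContinuousLinearMap.adjoint ι x) with hedef
    have h3 : ⟪ContinuousLinearMap.adjoint ι x, u⟫ = ⟪(e : V), u⟫ := by
      have hmem2 : ContinuousLinearMap.adjoint ι x - (e : V) ∈ Kᗮ :=
        K.sub_starProjection_mem_orthogonal _
      have h0 : ⟪u, ContinuousLinearMap.adjoint ι x - (e : V)⟫ = 0 :=
        Submodule.inner_right_of_mem_orthogonal huK hmem2
      have h0' : ⟪ContinuousLinearMap.adjoint ι x - (e : V), u⟫ = 0 := by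
        rw [real_inner_comm]; exact h0
      rw [inner_sub_left] at h0'
      linarith
    have h4 : ⟪(e : V), u⟫ = ⟪e - Tad (Y x), u'⟫ + ⟪Tad (Y x), u'⟫ := by
      rw [inner_sub_left]
      have hci : ⟪e, u'⟫ = ⟪(e : V), u⟫ := Submodule.coe_inner K e u'
      linarith
    have h5 : ⟪e - Tad (Y x), u'⟫ ≤ ε := by
      calc ⟪e - Tad (Y x), u'⟫ ≤ ‖e - Tad (Y x)‖ * ‖u'‖ := real_inner_le_norm _ _
      _ = ‖Tad (Y x) - e‖ := by rw [hu'1, mul_one, norm_sub_rev]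
      _ ≤ ε := (hY x).le
    have h6 : ⟪Tad (Y x), u'⟫ = ⟪Y x, j u⟫ := by
      rw [hTaddef, ContinuousLinearMap.adjoint_inner_left]
      rfl
    have h7 : ⟪Y x, j u⟫ ≤ ‖Y x‖ * ‖j u‖ := real_inner_le_norm _ _
    have hsq : ‖ι u‖^2 = ⟪ι u, ι u⟫ := (real_inner_self_eq_norm_sq _).symm
    have hdecomp : ⟪ι u, ι u⟫ = ⟪ι u - x, ι u⟫ + ⟪x, ι u⟫ := by
      rw [inner_sub_left]; ring
    have hbound : ‖ι u‖^2 ≤ ε * (‖ι‖ + 1) + ‖Y x‖ * ‖j u‖ := by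
      rw [hsq, hdecomp]
      have := h2.trans (h3.trans h4)
      nlinarith [h1, h5, h6, h7]
    have hterm : 8 * C₀^2 * ‖Y x‖^2 / κ ≤ ω :=
      Finset.single_le_sum (f := fun x : H => 8 * C₀^2 * ‖Y x‖^2 / κ)
        (fun i _ => by positivity) (htfin.mem_toFinset.mpr hxt)
    have heps : C₀ * (ε * (‖ι‖ + 1)) = κ / 32 := by
      rw [hεdef]; field_simp
    have hamgm : C₀ * (‖Y x‖ * ‖j u‖) ≤ κ/32 + (8 * C₀^2 * ‖Y x‖^2 / κ) * ‖j u‖^2 := by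
      have hd : (8 * C₀^2 * ‖Y x‖^2 / κ) * κ = 8 * C₀^2 * ‖Y x‖^2 := by
        field_simp
      have key : κ * (C₀ * (‖Y x‖ * ‖j u‖))
          ≤ κ * (κ/32 + (8 * C₀^2 * ‖Y x‖^2 / κ) * ‖j u‖^2) := by
        nlinarith [sq_nonneg (4 * (C₀ * ‖Y x‖ * ‖j u‖) - κ/4), hd]
      exact (mul_le_mul_iff_right₀ hκ).mp key
    have hmono : (8 * C₀^2 * ‖Y x‖^2 / κ) * ‖j u‖^2 ≤ ω * ‖j u‖^2 :=
      mul_le_mul_of_nonneg_right hterm (sq_nonneg _)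
    calc C₀ * ‖ι u‖^2 ≤ C₀ * (ε * (‖ι‖ + 1) + ‖Y x‖ * ‖j u‖) :=
          mul_le_mul_of_nonneg_left hbound hC₀pos.le
    _ = C₀ * (ε * (‖ι‖ + 1)) + C₀ * (‖Y x‖ * ‖j u‖) := by ring
    _ ≤ κ/32 + (κ/32 + (8 * C₀^2 * ‖Y x‖^2 / κ) * ‖j u‖^2) := by
        rw [heps]; exact add_le_add_right hamgm _
    _ ≤ κ/8 + ω * ‖j u‖^2 := by
        have := hmono; linarith
  -- conclude
  refine ⟨ω, ?_⟩
  intro u huS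
  rcases eq_or_ne u 0 with rfl | hu0
  · simp
  · have hn : 0 < ‖u‖ := norm_pos_iff.mpr hu0
    set w : V := ‖u‖⁻¹ • u with hwdef
    have hw1 : ‖w‖ = 1 := norm_smul_inv_norm hu0
    have hwS : w ∈ S := fun v hv => by
      rw [hwdef, map_smul, ContinuousLinearMap.smul_apply, huS v hv, smul_zero]
    have hC := hmain w hwS hw1
    have hg := hglobal₀ w
    rw [hw1] at hg
    have hfin : κ/4 ≤ alam w w + ω * ‖j w‖^2 := by
      have : κ/2 * (1:ℝ)^2 = κ/2 := by ring
      rw [this] at hg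
      linarith
    have hA : alam w w = ‖u‖⁻¹ * (‖u‖⁻¹ * alam u u) := by
      rw [hwdef]
      simp only [map_smul, ContinuousLinearMap.smul_apply, smul_eq_mul]
    have hB : ‖j w‖^2 = ‖u‖⁻¹^2 * ‖j u‖^2 := by
      rw [hwdef, map_smul, norm_smul, norm_inv, norm_norm]
      ring
    rw [hA, hB] at hfin
    have h2 : (0:ℝ) ≤ ‖u‖^2 := sq_nonneg _
    have key := mul_le_mul_of_nonneg_right hfin h2
    have e1 : (‖u‖⁻¹ * (‖u‖⁻¹ * alam u u) + ω * (‖u‖⁻¹^2 * ‖j u‖^2)) * ‖u‖^2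
        = alam u u + ω * ‖j u‖^2 := by
      field_simp
    rw [e1] at key
    rw [ge_iff_le]
    calc κ/4 * ‖u‖^2 = κ/4 * ‖u‖^2 := rfl
    _ ≤ alam u u + ω * ‖j u‖^2 := key
end

section
/- Let Ω ⊂ ℝ^N be bounded open with Lipschitz boundary, coefficients as in the Hypothesis, λ ∉ σ(A_D), β ∈ ℝ. Let A_β be the Robin realization of 𝒜 (boundary condition ∂_ν u + β u|_{∂Ω} = 0) and D_λ^𝒜 the Dirichlet-to-Neumann operator. Then the map u ↦ u|_{∂Ω} is a linear isomorphism from the kernel of (λ − A_β) onto the kernel of (β + D_λ^𝒜). -/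
open scoped RealInnerProductSpace

/-- The trace map `u ↦ u|_∂Ω` is a linear isomorphism from
`ker(λ − A_β)` onto `ker(β + D_λ^𝒜)`. Abstractly: `V = H¹(Ω)`, `H = L²(Ω)` with
embedding `ι`, `Hb = L²(∂Ω)` with trace `j`; an eigenfunction of `A_β` for `λ` is
`u ∈ V` with `𝔞(u,v) + β⟨ju, jv⟩ = λ⟨ιu, ιv⟩` for all `v`, and `φ ∈ ker(β + D_λ^𝒜)`
means `φ = j u` for some `u` with `𝔞(u,v) − λ⟨ιu,ιv⟩ = ⟨−βφ, jv⟩` for all `v`.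
The condition `λ ∉ σ(A_D)` is encoded by `hAD`. -/
theorem trace_iso_ker_Robin_ker_DtN
    {V H Hb : Type*} [NormedAddCommGroup V] [InnerProductSpace ℝ V] [CompleteSpace V]
    [NormedAddCommGroup H] [InnerProductSpace ℝ H] [CompleteSpace H]
    [NormedAddCommGroup Hb] [InnerProductSpace ℝ Hb] [CompleteSpace Hb]
    (ι : V →L[ℝ] H) (hι : Function.Injective ι) (hιdense : DenseRange ι)
    (j : V →L[ℝ] Hb) (hjdense : DenseRange j)
    (a : V →L[ℝ] V →L[ℝ] ℝ) (lam β : ℝ)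
    -- `λ ∉ σ(A_D)`: `λ` is not an eigenvalue of the Dirichlet realization `A_D`:
    (hAD : ∀ u : V, j u = 0 → (∀ v : V, j v = 0 → a u v = lam * ⟪ι u, ι v⟫) → u = 0) :
    Set.InjOn j {u : V | ∀ v : V, a u v + β * ⟪j u, j v⟫ = lam * ⟪ι u, ι v⟫} ∧
      j '' {u : V | ∀ v : V, a u v + β * ⟪j u, j v⟫ = lam * ⟪ι u, ι v⟫} =
        {φ : Hb | ∃ u : V, j u = φ ∧
          ∀ v : V, a u v - lam * ⟪ι u, ι v⟫ = ⟪-β • φ, j v⟫} := by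
  constructor
  · intro u1 h1 u2 h2 hj
    have hu : j (u1 - u2) = 0 := by simp [map_sub, hj]
    have key : ∀ v : V, j v = 0 → a (u1 - u2) v = lam * ⟪ι (u1 - u2), ι v⟫ := by
      intro v _
      have e1 := h1 v
      have e2 := h2 v
      simp only [map_sub, ContinuousLinearMap.sub_apply, inner_sub_left, hj] at *
      ring_nf
      linarith
    have := hAD (u1 - u2) hu key
    exact sub_eq_zero.mp this
  · ext φ
    constructor
    · rintro ⟨u, hu, rfl⟩
      refine ⟨u, rfl, fun v => ?_⟩
      have := hu v
      rw [real_inner_smul_left]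
      linarith
    · rintro ⟨u, rfl, hu⟩
      refine ⟨u, fun v => ?_, rfl⟩
      have := hu v
      rw [real_inner_smul_left] at this
      linarith
end

section
/- Under the above setting (Ω bounded Lipschitz, λ ∉ σ(A_D), β ∈ ℝ): −β is an eigenvalue of D_λ^𝒜 if and only if λ is an eigenvalue of A_β. Since both operators have compact resolvent (hence pure point spectrum), −β ∈ σ(D_λ^𝒜) iff λ ∈ σ(A_β). -/
open scoped RealInnerProductSpace

/-- `−β` is an eigenvalue of the Dirichlet-to-Neumann operator `D_λ^𝒜`
if and only if `λ` is an eigenvalue of the Robin realization `A_β`; since both operators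
have compact resolvent (pure point spectrum), `−β ∈ σ(D_λ^𝒜)` iff `λ ∈ σ(A_β)`.
Abstract setting as in the previous statement; nonzero eigenfunctions of `A_β` are
detected in `H = L²(Ω)` via `ι`, and eigenvectors of `D_λ^𝒜` in `Hb = L²(∂Ω)`. -/
theorem eigenvalue_DtN_iff_eigenvalue_Robin
    {V H Hb : Type*} [NormedAddCommGroup V] [InnerProductSpace ℝ V] [CompleteSpace V]
    [NormedAddCommGroup H] [InnerProductSpace ℝ H] [CompleteSpace H]
    [NormedAddCommGroup Hb] [InnerProductSpace ℝ Hb] [CompleteSpace Hb]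
    (ι : V →L[ℝ] H) (hι : Function.Injective ι) (hιdense : DenseRange ι)
    (j : V →L[ℝ] Hb) (hjdense : DenseRange j)
    (a : V →L[ℝ] V →L[ℝ] ℝ) (lam β : ℝ)
    -- `λ ∉ σ(A_D)`:
    (hAD : ∀ u : V, j u = 0 → (∀ v : V, j v = 0 → a u v = lam * ⟪ι u, ι v⟫) → u = 0) :
    (∃ φ : Hb, φ ≠ 0 ∧ ∃ u : V, j u = φ ∧
        ∀ v : V, a u v - lam * ⟪ι u, ι v⟫ = ⟪-β • φ, j v⟫) ↔
      ∃ u : V, ι u ≠ 0 ∧ ∀ v : V, a u v + β * ⟪j u, j v⟫ = lam * ⟪ι u, ι v⟫ := by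
  constructor
  · rintro ⟨φ, hφ, u, hju, hu⟩
    refine ⟨u, ?_, fun v => ?_⟩
    · intro h
      apply hφ
      have : u = 0 := hι (by simpa using h)
      simp [← hju, this]
    · have := hu v
      rw [real_inner_smul_left, ← hju] at this
      linarith
  · rintro ⟨u, hu, hrob⟩
    have hju : j u ≠ 0 := by
      intro h
      apply hu
      have : u = 0 := hAD u h (fun v _ => by
        have := hrob v
        rw [h] at this
        simpa using this)
      simp [this]
    refine ⟨j u, hju, u, rfl, fun v => ?_⟩
    rw [real_inner_smul_left]
    have := hrob v
    linarith
end
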